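/- Let m ≥ 5 be odd and let i > j. Then the following identities hold modulo 2: (1) (A_{ar} H)_{ij} ≡ (H A_{ar}ᵀ)_{ij} for all a = 2,3,…,m and r = 1,2; (2) (A_{12} H)_{ij} ≡ 0; (3) (H A_{11}ᵀ)_{ij} ≡ 0. -/

import Mathlib

open Matrix

/-- `bwBit i a` is the `a`-th binary digit of `i`. -/
def bwBit (i a : ℕ) : ℕ := i / 2 ^ a % 2

/-- `bwPar m i` is the number of zero digits in the length-`m` binary expansion of `i`, mod 2. -/
def bwPar (m i : ℕ) : ℕ := ((Finset.range m).filter fun a => bwBit i a = 0).card % 2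

/-- The exponent of `√2` in the `(i,j)` entry of the Gram matrix of `BW(m)`. -/
def bwExp (m i j : ℕ) : ℤ :=
  (bwPar m i : ℤ) + (bwPar m j : ℤ) - 2 * (((m + 1) / 2 : ℕ) : ℤ) +
    ∑ l ∈ Finset.range m,
      (2 * (bwBit i l : ℤ) * (bwBit j l : ℤ) - (bwBit i l : ℤ) - (bwBit j l : ℤ) + 2)

/-- The Gram matrix of the Barnes-Wall lattice `BW(m)`:
`G i j = (w_i, w_j) = √2 ^ (p i + p j - 2⌈m/2⌉ + ∑ (2 i[l] j[l] - i[l] - j[l] + 2))`. -/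
noncomputable def bwGram (m : ℕ) : Matrix (Fin (2 ^ m)) (Fin (2 ^ m)) ℝ :=
  Matrix.of fun i j => Real.sqrt 2 ^ bwExp m (i : ℕ) (j : ℕ)

/-- The matrix of the lattice automorphism `Σ_{ar}` of `BW(m)` in the basis `w_i`
(acting on row vectors from the right); `r = 1` gives `Σ_{a1}`, any other `r` gives `Σ_{a2}`. -/
def bwSigma (m a r : ℕ) : Matrix (Fin (2 ^ m)) (Fin (2 ^ m)) ℤ :=
  Matrix.of fun i j =>
    if r = 1 then
      if bwBit (i : ℕ) (m - a) = 0 then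
        (if j = i then -1 else 0) +
          (if (j : ℕ) = (i : ℕ) + 2 ^ (m - a) then 2 ^ bwPar m (i : ℕ) else 0)
      else if j = i then 1 else 0
    else
      if bwBit (i : ℕ) (m - a) = 1 then
        (if j = i then -1 else 0) +
          (if (j : ℕ) + 2 ^ (m - a) = (i : ℕ) then 2 ^ bwPar m (i : ℕ) else 0)
      else if j = i then 1 else 0

/-- `A_{ar} = Σ_{ar} - I`. -/
def bwA (m a r : ℕ) : Matrix (Fin (2 ^ m)) (Fin (2 ^ m)) ℤ := bwSigma m a r - 1

/-- The half-Gram matrix `H` of `BW(m)`: `H i j = G i j` for `i > j`, `G i i / 2` on the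
diagonal, and `0` above the diagonal. -/
noncomputable def bwH (m : ℕ) : Matrix (Fin (2 ^ m)) (Fin (2 ^ m)) ℝ :=
  Matrix.of fun i j =>
    if j < i then Real.sqrt 2 ^ bwExp m (i : ℕ) (j : ℕ)
    else if i = j then Real.sqrt 2 ^ (bwExp m (i : ℕ) (i : ℕ) - 2)
    else 0

/-- The matrix `H - Σ H Σᵀ` underlying the bilinear form `B_Σ`. -/
noncomputable def bwBMat (m : ℕ) (S : Matrix (Fin (2 ^ m)) (Fin (2 ^ m)) ℤ) :
    Matrix (Fin (2 ^ m)) (Fin (2 ^ m)) ℝ :=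
  bwH m - S.map (Int.cast : ℤ → ℝ) * bwH m * (S.map (Int.cast : ℤ → ℝ))ᵀ

/-- The bilinear form `B_Σ(α, β) = ∑_{i > j} α_i β_j (H - Σ H Σᵀ)_{ij}`. -/
noncomputable def bwBQuad (m : ℕ) (S : Matrix (Fin (2 ^ m)) (Fin (2 ^ m)) ℤ)
    (α β : Fin (2 ^ m) → ℤ) : ℝ :=
  ∑ i, ∑ j, if j < i then (α i : ℝ) * (β j : ℝ) * bwBMat m S i j else 0

/-- `u_Σ(α) = (-1)^{B_Σ(α,α)}`, rendered as `cos (π B_Σ(α,α))`, which agrees with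
`(-1)^k` whenever `B_Σ(α,α)` is the integer `k`. -/
noncomputable def bwU (m : ℕ) (S : Matrix (Fin (2 ^ m)) (Fin (2 ^ m)) ℤ)
    (α : Fin (2 ^ m) → ℤ) : ℝ :=
  Real.cos (Real.pi * bwBQuad m S α α)

lemma pow2pos (b : ℕ) : 0 < 2^b := Nat.pow_pos (by norm_num)

lemma bit01 (x l : ℕ) : bwBit x l = 0 ∨ bwBit x l = 1 := Nat.mod_two_eq_zero_or_one _

lemma pow2_even {k : ℕ} (h : 0 < k) : 2^k % 2 = 0 := by
  rw [show k = (k-1)+1 by omega, pow_succ']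
  exact Nat.mul_mod_right 2 _

lemma bit_mod (x b l : ℕ) (h : b < l) : bwBit (x % 2^l) b = bwBit x b := by
  have hdm := Nat.div_add_mod x (2^l)
  have hdiv : x / 2^b = x % 2^l / 2^b + 2^(l-b) * (x / 2^l) := by
    conv_lhs => rw [show x = x % 2^l + (2^(l-b) * (x / 2^l)) * 2^b by
      rw [mul_right_comm, ← pow_add, Nat.sub_add_cancel h.le]; omega]
    rw [Nat.add_mul_div_right _ _ (pow2pos b)]
  have heven : (2^(l-b) * (x / 2^l)) % 2 = 0 := by
    rw [Nat.mul_mod, pow2_even (by omega : 0 < l - b)]; simp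
  unfold bwBit
  omega

lemma carrybound {x b L : ℕ} (hbL : b < L) (hx : x < 2^L) (h : bwBit x b = 0) :
    x + 2^b < 2^L := by
  obtain ⟨u, s, hs, hx2, hu⟩ : ∃ u s, s < 2^b ∧ x = 2^b * u + s ∧ u % 2 = 0 :=
    ⟨_, _, Nat.mod_lt _ (pow2pos b), (Nat.div_add_mod x (2^b)).symm, h⟩
  have hpow : (2:ℕ)^L = 2^b * 2^(L-b) := by rw [← pow_add]; congr 1; omega
  have hub : u < 2^(L-b) := by
    have : 2^b * u < 2^b * 2^(L-b) := by omega
    exact Nat.lt_of_mul_lt_mul_left this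
  have hLbeven : 2^(L-b) % 2 = 0 := pow2_even (by omega)
  have hu2 : u + 2 ≤ 2^(L-b) := by omega
  have e3 : 2^b * (u+2) ≤ 2^b * 2^(L-b) := Nat.mul_le_mul_left _ hu2
  have e2 : 2^b * (u+2) = 2^b * u + 2^b + 2^b := by ring
  omega

lemma bitadd {x b : ℕ} (h : bwBit x b = 0) (l : ℕ) :
    bwBit (x + 2^b) l = if l = b then 1 else bwBit x l := by
  rcases lt_trichotomy l b with hl | rfl | hl
  · rw [if_neg (by omega)]
    unfold bwBit
    rw [show (2:ℕ)^b = 2^(b-l) * 2^l by rw [← pow_add]; congr 1; omega,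
      Nat.add_mul_div_right _ _ (pow2pos l)]
    have : 2^(b-l) % 2 = 0 := pow2_even (by omega)
    omega
  · rw [if_pos rfl]
    unfold bwBit at h ⊢
    rw [Nat.add_div_right _ (pow2pos l)]
    generalize (x+2^l) / 2^l = t at *
    omega
  · rw [if_neg (by omega)]
    have key : (x + 2^b) / 2^l = x / 2^l := by
      have hmod : x % 2^l + 2^b < 2^l :=
        carrybound hl (Nat.mod_lt _ (pow2pos l)) (by rw [bit_mod _ _ _ hl]; exact h)
      have hdm := Nat.div_add_mod x (2^l)
      conv_lhs => rw [show x + 2^b = (x % 2^l + 2^b) + 2^l * (x / 2^l) by omega]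
      rw [Nat.add_mul_div_left _ _ (pow2pos l), Nat.div_eq_of_lt hmod]
      omega
    unfold bwBit
    rw [key]

lemma split_of_bit_one {x b : ℕ} (h : bwBit x b = 1) :
    ∃ k, x = k + 2^b ∧ bwBit k b = 0 := by
  unfold bwBit at h
  have hx : 2^b ≤ x := by
    have h1 : 1 ≤ x / 2^b := by generalize x / 2^b = t at h ⊢; omega
    calc 2^b = 1 * 2^b := (one_mul _).symm
    _ ≤ x / 2^b * 2^b := Nat.mul_le_mul_right _ h1
    _ ≤ x := Nat.div_mul_le_self x _
  refine ⟨x - 2^b, by omega, ?_⟩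
  unfold bwBit
  have hd : (x - 2^b) + 2^b = x := by omega
  have h2 := Nat.add_div_right (x - 2^b) (pow2pos b)
  rw [hd] at h2
  generalize hgen : x / 2^b = t at h h2
  omega

lemma top_bit {x n : ℕ} (hx : x < 2^(n+1)) : (bwBit x n = 1 ↔ 2^n ≤ x) := by
  unfold bwBit
  constructor
  · intro h
    by_contra hc
    rw [Nat.div_eq_of_lt (by omega)] at h
    omega
  · intro h
    have h1 : 1 ≤ x / 2^n := (Nat.le_div_iff_mul_le (pow2pos n)).mpr (by omega)
    have h2 : x / 2^n < 2 := by
      rw [Nat.div_lt_iff_lt_mul (pow2pos n)]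
      calc x < 2^(n+1) := hx
      _ = 2 * 2^n := pow_succ' 2 n
    omega

def bwDD (m i j : ℕ) : ℕ := ((Finset.range m).filter fun l => bwBit i l ≠ bwBit j l).card

lemma bwDD_le (m i j : ℕ) : bwDD m i j ≤ m :=
  le_trans (Finset.card_filter_le _ _) (by simp)

lemma bwPar_le (m i : ℕ) : bwPar m i ≤ 1 := Nat.le_of_lt_succ (Nat.mod_lt _ (by norm_num))

lemma zcard (m i : ℕ) :
    ((((Finset.range m).filter fun a => bwBit i a = 0)).card : ℤ)
      = m - ∑ l ∈ Finset.range m, (bwBit i l : ℤ) := by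
  rw [Finset.card_filter, eq_sub_iff_add_eq]
  push_cast
  rw [← Finset.sum_add_distrib]
  rw [Finset.sum_congr rfl (fun l _ => show ((if bwBit i l = 0 then (1:ℤ) else 0) + bwBit i l) = 1 by
    rcases bit01 i l with h|h <;> simp [h])]
  simp

lemma ddval (m i j : ℕ) : (bwDD m i j : ℤ)
    = (∑ l ∈ Finset.range m, (bwBit i l : ℤ)) + (∑ l ∈ Finset.range m, (bwBit j l : ℤ))
      - 2 * ∑ l ∈ Finset.range m, ((bwBit i l : ℤ) * bwBit j l) := by
  rw [bwDD, Finset.card_filter, Finset.mul_sum, ← Finset.sum_add_distrib, ← Finset.sum_sub_distrib]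
  push_cast
  exact Finset.sum_congr rfl fun l _ => by
    rcases bit01 i l with h|h <;> rcases bit01 j l with h'|h' <;> simp [h, h']

lemma bwExp_eq {m : ℕ} (hm : Odd m) (i j : ℕ) :
    bwExp m i j = (bwPar m i : ℤ) + bwPar m j + m - 1 - bwDD m i j := by
  obtain ⟨t, rfl⟩ := hm
  have hhalf : (((2*t+1+1)/2 : ℕ) : ℤ) = t + 1 := by
    have : (2*t+1+1)/2 = t+1 := by omega
    rw [this]; push_cast; ring
  rw [bwExp, hhalf, ddval]
  have hsum : ∑ l ∈ Finset.range (2*t+1),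
      (2 * (bwBit i l : ℤ) * (bwBit j l : ℤ) - (bwBit i l : ℤ) - (bwBit j l : ℤ) + 2)
      = ∑ l ∈ Finset.range (2*t+1),
        ((2:ℤ) - ((bwBit i l : ℤ) + bwBit j l - 2 * ((bwBit i l : ℤ) * bwBit j l))) :=
    Finset.sum_congr rfl fun l _ => by ring
  rw [hsum, Finset.sum_sub_distrib, Finset.sum_const, Finset.card_range,
    Finset.sum_sub_distrib, Finset.sum_add_distrib, ← Finset.mul_sum]
  push_cast
  ring

lemma par_dd (m i j : ℕ) : ((bwPar m i : ℤ) + bwPar m j - bwDD m i j) % 2 = 0 := by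
  have hzi := zcard m i
  have hzj := zcard m j
  have hdd := ddval m i j
  have hpi : (bwPar m i : ℤ)
      = ((((Finset.range m).filter fun a => bwBit i a = 0)).card : ℤ) % 2 := by
    rw [bwPar]; push_cast; ring
  have hpj : (bwPar m j : ℤ)
      = ((((Finset.range m).filter fun a => bwBit j a = 0)).card : ℤ) % 2 := by
    rw [bwPar]; push_cast; ring
  omega

def bwN (m i j : ℕ) : ℕ := (bwExp m i j).toNat / 2

lemma bwN_spec {m : ℕ} (hm : Odd m) (i j : ℕ) :
    bwExp m i j = 2 * bwN m i j ∧
      (bwDD m i j : ℤ) + 2 * bwN m i j = (m : ℤ) - 1 + bwPar m i + bwPar m j := by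
  have h1 := bwExp_eq hm i j
  have h2 := par_dd m i j
  have h3 := bwDD_le m i j
  have h4 := bwPar_le m i
  have h5 := bwPar_le m j
  have hm1 : m % 2 = 1 := Nat.odd_iff.mp hm
  have hdef : bwN m i j = (bwExp m i j).toNat / 2 := rfl
  omega

lemma bwN_zero_iff {m : ℕ} (hm : Odd m) (i j : ℕ) :
    bwN m i j = 0 ↔ (bwDD m i j : ℤ) = (m : ℤ) - 1 + bwPar m i + bwPar m j := by
  have := bwN_spec hm i j
  omega

lemma bwDD_eq_m_iff (m i j : ℕ) :
    bwDD m i j = m ↔ ∀ l, l < m → bwBit i l ≠ bwBit j l := by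
  constructor
  · intro h l hl heq
    have hsub : (Finset.range m).filter (fun l => bwBit i l ≠ bwBit j l)
        ⊆ (Finset.range m).erase l := by
      rw [Finset.subset_erase]
      exact ⟨Finset.filter_subset _ _, by simp [heq]⟩
    have := Finset.card_le_card hsub
    rw [Finset.card_erase_of_mem (Finset.mem_range.mpr hl), Finset.card_range] at this
    rw [bwDD] at h
    omega
  · intro h
    rw [bwDD, Finset.filter_true_of_mem (fun l hl => h l (Finset.mem_range.mp hl)),
      Finset.card_range]

lemma bwDD_self (m i : ℕ) : bwDD m i i = 0 := by simp [bwDD]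

lemma bwPar_flip {x b m : ℕ} (hb : b < m) (h : bwBit x b = 0) :
    bwPar m (x + 2^b) + bwPar m x = 1 := by
  have hset : (Finset.range m).filter (fun l => bwBit (x+2^b) l = 0)
      = ((Finset.range m).filter (fun l => bwBit x l = 0)).erase b := by
    ext l
    simp only [Finset.mem_erase, Finset.mem_filter, Finset.mem_range, bitadd h l]
    by_cases hlb : l = b <;> simp [hlb] <;> tauto
  have hmem : b ∈ (Finset.range m).filter (fun l => bwBit x l = 0) :=
    Finset.mem_filter.mpr ⟨Finset.mem_range.mpr hb, h⟩
  have hpos : 1 ≤ ((Finset.range m).filter (fun l => bwBit x l = 0)).card :=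
    Finset.card_pos.mpr ⟨b, hmem⟩
  rw [bwPar, bwPar, hset, Finset.card_erase_of_mem hmem]
  omega

lemma int_pow2_odd_iff (n : ℕ) : ((2:ℤ)^n % 2 = 1) ↔ n = 0 := by
  cases n with
  | zero => norm_num
  | succ t =>
    rw [pow_succ]
    have : ((2:ℤ)^t * 2) % 2 = 0 := by
      rw [Int.mul_emod, Int.emod_self]; simp
    omega

def bwHZ (m i j : ℕ) : ℤ :=
  if j < i then 2 ^ bwN m i j else if i = j then 2 ^ (bwN m i i - 1) else 0

lemma bwN_diag_ge {m : ℕ} (hm : Odd m) (hm5 : 5 ≤ m) (y : ℕ) : 2 ≤ bwN m y y := by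
  have h := (bwN_spec hm y y).2
  rw [bwDD_self] at h
  have := bwPar_le m y
  omega

lemma bwHZ_odd_iff {m : ℕ} (hm : Odd m) (hm5 : 5 ≤ m) (y z : ℕ) :
    bwHZ m y z % 2 = 1 ↔ (z < y ∧ bwN m y z = 0) := by
  unfold bwHZ
  by_cases h1 : z < y
  · rw [if_pos h1, int_pow2_odd_iff]
    simp [h1]
  · rw [if_neg h1]
    by_cases h2 : y = z
    · rw [if_pos h2, int_pow2_odd_iff]
      have := bwN_diag_ge hm hm5 y
      simp [h1]
      omega
    · rw [if_neg h2]
      simp [h1]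

lemma term_odd_iff {m : ℕ} (hm : Odd m) (hm5 : 5 ≤ m) (p y z : ℕ) :
    ((2:ℤ)^p * bwHZ m y z) % 2 = 1 ↔ (p = 0 ∧ z < y ∧ bwN m y z = 0) := by
  rw [show ((2:ℤ)^p * bwHZ m y z) % 2 = ((2:ℤ)^p % 2) * (bwHZ m y z % 2) % 2 from
    (Int.mul_emod _ _ _)]
  have ha := Int.emod_two_eq ((2:ℤ)^p)
  have hb := Int.emod_two_eq (bwHZ m y z)
  have h1 := int_pow2_odd_iff p
  have h2 := bwHZ_odd_iff hm hm5 y z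
  constructor
  · intro h
    rcases ha with ha | ha <;> rcases hb with hb | hb <;> rw [ha, hb] at h <;>
      norm_num at h
    exact ⟨h1.mp ha, h2.mp hb⟩
  · rintro ⟨hp, hzy⟩
    rw [h1.mpr hp, h2.mpr hzy]
    norm_num

lemma top_split {m x : ℕ} (hm : 1 ≤ m) (hx : x < 2^m) :
    (bwBit x (m-1) = 1 ↔ 2^(m-1) ≤ x) := by
  have h : x < 2^((m-1)+1) := by
    rw [show m - 1 + 1 = m by omega]; exact hx
  exact top_bit h

lemma top_split' {m x : ℕ} (hm : 1 ≤ m) (hx : x < 2^m) :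
    (bwBit x (m-1) = 0 ↔ x < 2^(m-1)) := by
  have h1 := top_split hm hx
  rcases bit01 x (m-1) with h | h <;> rw [h] at h1 ⊢ <;> constructor <;> intro h2 <;> omega

lemma equiv1 {m b i j : ℕ} (hm5 : 5 ≤ m) (hb : b < m - 1) (hi : i < 2^m) (hj : j < 2^m)
    (hij : j < i) (hbi : bwBit i b = 0) (hbj : bwBit j b = 0) :
    (∀ l, l < m → bwBit (i + 2^b) l ≠ bwBit j l)
      ↔ ((∀ l, l < m → bwBit i l ≠ bwBit (j + 2^b) l) ∧ j + 2^b < i) := by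
  have hm1 : 1 ≤ m := by omega
  have hbm : b < m := by omega
  constructor
  · intro h
    constructor
    · intro l hl
      by_cases hlb : l = b
      · subst hlb
        rw [bitadd hbj l, if_pos rfl, hbi]
        omega
      · rw [bitadd hbj l, if_neg hlb]
        have hh := h l hl
        rwa [bitadd hbi l, if_neg hlb] at hh
    · have hne := h (m-1) (by omega)
      rw [bitadd hbi (m-1), if_neg (by omega)] at hne
      have hitop : bwBit i (m-1) = 1 := by
        rcases bit01 i (m-1) with h0 | h1
        · exfalso
          have hj1 : bwBit j (m-1) = 1 := by rcases bit01 j (m-1) with h'|h' <;> omega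
          have := (top_split hm1 hj).mp hj1
          have := (top_split' hm1 hi).mp h0
          omega
        · exact h1
      have hjtop : bwBit j (m-1) = 0 := by rcases bit01 j (m-1) with h'|h' <;> omega
      have hjb : j + 2^b < 2^m := carrybound hbm hj hbj
      have hjb2 : bwBit (j + 2^b) (m-1) = 0 := by
        rw [bitadd hbj (m-1), if_neg (by omega)]; exact hjtop
      have h1 := (top_split' hm1 hjb).mp hjb2
      have h2 := (top_split hm1 hi).mp hitop
      omega
  · rintro ⟨h, hlt⟩ l hl
    by_cases hlb : l = b
    · subst hlb
      rw [bitadd hbi l, if_pos rfl, hbj]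
      omega
    · rw [bitadd hbi l, if_neg hlb]
      have hh := h l hl
      rwa [bitadd hbj l, if_neg hlb] at hh

lemma equiv2 {m b k k' : ℕ} (hm5 : 5 ≤ m) (hb : b < m - 1)
    (hik : k + 2^b < 2^m) (hjk : k' + 2^b < 2^m) (hij : k' < k)
    (hbk : bwBit k b = 0) (hbk' : bwBit k' b = 0) :
    ((∀ l, l < m → bwBit k l ≠ bwBit (k' + 2^b) l) ∧ k' + 2^b < k)
      ↔ (∀ l, l < m → bwBit (k + 2^b) l ≠ bwBit k' l) := by
  have hm1 : 1 ≤ m := by omega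
  constructor
  · rintro ⟨h, _⟩ l hl
    by_cases hlb : l = b
    · subst hlb
      rw [bitadd hbk l, if_pos rfl, hbk']
      omega
    · rw [bitadd hbk l, if_neg hlb]
      have hh := h l hl
      rwa [bitadd hbk' l, if_neg hlb] at hh
  · intro h
    have hfor : ∀ l, l < m → bwBit k l ≠ bwBit (k' + 2^b) l := by
      intro l hl
      by_cases hlb : l = b
      · subst hlb
        rw [bitadd hbk' l, if_pos rfl, hbk]
        omega
      · rw [bitadd hbk' l, if_neg hlb]
        have hh := h l hl
        rwa [bitadd hbk l, if_neg hlb] at hh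
    refine ⟨hfor, ?_⟩
    have hk2 : k < 2^m := lt_of_le_of_lt (Nat.le_add_right _ _) hik
    have hk'2 : k' < 2^m := lt_of_le_of_lt (Nat.le_add_right _ _) hjk
    have hne := hfor (m-1) (by omega)
    rw [bitadd hbk' (m-1), if_neg (by omega)] at hne
    have hktop : bwBit k (m-1) = 1 := by
      rcases bit01 k (m-1) with h0 | h1
      · exfalso
        have hk'1 : bwBit k' (m-1) = 1 := by rcases bit01 k' (m-1) with h'|h' <;> omega
        have := (top_split hm1 hk'2).mp hk'1
        have := (top_split' hm1 hk2).mp h0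
        omega
      · exact h1
    have hk'top : bwBit k' (m-1) = 0 := by rcases bit01 k' (m-1) with h'|h' <;> omega
    have hjb2 : bwBit (k' + 2^b) (m-1) = 0 := by
      rw [bitadd hbk' (m-1), if_neg (by omega)]; exact hk'top
    have h1 := (top_split' hm1 hjk).mp hjb2
    have h2 := (top_split hm1 hk2).mp hktop
    generalize 2^(m-1) = T at h1 h2
    generalize 2^b = B at h1 ⊢
    omega

def bwHZM (m : ℕ) : Matrix (Fin (2 ^ m)) (Fin (2 ^ m)) ℤ :=
  Matrix.of fun i j => bwHZ m (i : ℕ) (j : ℕ)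

lemma sqrt2_zpow_two_mul (n : ℕ) : Real.sqrt 2 ^ (2 * (n:ℤ)) = ((2:ℝ))^n := by
  rw [_root_.zpow_mul]
  have h2 : Real.sqrt 2 ^ (2:ℤ) = 2 := by
    rw [zpow_two]
    exact Real.mul_self_sqrt (by norm_num)
  rw [h2, zpow_natCast]

lemma bwH_eq_map {m : ℕ} (hm : Odd m) (hm5 : 5 ≤ m) :
    bwH m = (bwHZM m).map (Int.cast : ℤ → ℝ) := by
  ext i j
  simp only [bwH, bwHZM, Matrix.map_apply, Matrix.of_apply, bwHZ]
  have hlt : (j < i) ↔ ((j:ℕ) < (i:ℕ)) := Iff.rfl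
  by_cases h1 : (j:ℕ) < (i:ℕ)
  · rw [if_pos (hlt.mpr h1), if_pos h1, (bwN_spec hm (i:ℕ) (j:ℕ)).1]
    push_cast
    rw [sqrt2_zpow_two_mul]
  · rw [if_neg (fun hh => h1 (hlt.mp hh)), if_neg h1]
    by_cases h2 : i = j
    · have h2' : (i:ℕ) = (j:ℕ) := congrArg Fin.val h2
      rw [if_pos h2, if_pos h2']
      have hge := bwN_diag_ge hm hm5 (i:ℕ)
      have hspec := (bwN_spec hm (i:ℕ) (i:ℕ)).1
      have : bwExp m (i:ℕ) (i:ℕ) - 2 = 2 * ((bwN m (i:ℕ) (i:ℕ) - 1 : ℕ) : ℤ) := by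
        rw [hspec]; push_cast; omega
      rw [this]
      push_cast
      rw [sqrt2_zpow_two_mul]
    · rw [if_neg h2, if_neg (fun hh => h2 (Fin.ext hh))]
      norm_num

lemma sum_two_ite {n : ℕ} (f : Fin n → ℤ) (x y : Fin n) (c d : ℤ) :
    ∑ k, ((if k = x then c else 0) + (if k = y then d else 0)) * f k = c * f x + d * f y := by
  simp [add_mul, ite_mul, zero_mul, Finset.sum_add_distrib, Finset.sum_ite_eq']

lemma sum_two_ite' {n : ℕ} (f : Fin n → ℤ) (x y : Fin n) (c d : ℤ) :
    ∑ k, f k * ((if k = x then c else 0) + (if k = y then d else 0)) = f x * c + f y * d := by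
  simp [mul_add, mul_ite, mul_zero, Finset.sum_add_distrib, Finset.sum_ite_eq']

lemma prodL1 {m a : ℕ} (i j : Fin (2^m)) (hbit : bwBit (i:ℕ) (m-a) = 0)
    (hbd : (i:ℕ) + 2^(m-a) < 2^m) :
    (bwA m a 1 * bwHZM m) i j
      = -2 * bwHZ m (i:ℕ) (j:ℕ) + 2^(bwPar m (i:ℕ)) * bwHZ m ((i:ℕ) + 2^(m-a)) (j:ℕ) := by
  set i' : Fin (2^m) := ⟨(i:ℕ) + 2^(m-a), hbd⟩ with hi'
  have hArow : ∀ k : Fin (2^m), bwA m a 1 i k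
      = (if k = i then -2 else 0) + (if k = i' then 2^(bwPar m (i:ℕ)) else 0) := by
    intro k
    have hcond : ((k:ℕ) = (i:ℕ) + 2^(m-a)) ↔ k = i' := by
      rw [Fin.ext_iff]
    simp only [bwA, Matrix.sub_apply, bwSigma, Matrix.of_apply, Matrix.one_apply,
      if_pos rfl, if_pos hbit]
    by_cases hk : k = i
    · have hne : ¬ ((k:ℕ) = (i:ℕ) + 2^(m-a)) := by
        subst hk; have := pow2pos (m-a); omega
      have hki' : ¬ (k = i') := fun h => hne (hcond.mpr h)
      subst hk
      simp [hne, hki']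
    · by_cases hk2 : k = i'
      · have hkv : (k:ℕ) = (i:ℕ) + 2^(m-a) := hcond.mpr hk2
        have hne1 : ¬ (i' = i) := fun h => by
          have hv := congrArg Fin.val h
          have := pow2pos (m-a)
          simp only [hi'] at hv
          omega
        simp [hk, hk2, hkv, hne1, Ne.symm hne1, (by rw [← hk2]; exact hkv : ((i':ℕ) = (i:ℕ) + 2^(m-a)))]
      · have hkv : ¬ ((k:ℕ) = (i:ℕ) + 2^(m-a)) := fun h => hk2 (hcond.mp h)
        simp [hk, hk2, hkv, (Ne.symm hk : ¬ i = k)]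
  rw [Matrix.mul_apply, Finset.sum_congr rfl (fun k _ => by rw [hArow k]), sum_two_ite]
  simp [bwHZM, hi']

lemma prodL1' {m a : ℕ} (i j : Fin (2^m)) (hbit : bwBit (i:ℕ) (m-a) = 1) :
    (bwA m a 1 * bwHZM m) i j = 0 := by
  rw [Matrix.mul_apply]
  apply Finset.sum_eq_zero
  intro k _
  have : bwA m a 1 i k = 0 := by
    simp only [bwA, Matrix.sub_apply, bwSigma, Matrix.of_apply, Matrix.one_apply,
      if_pos rfl]
    rw [if_neg (show ¬ bwBit (i:ℕ) (m-a) = 0 from by rw [hbit]; norm_num)]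
    by_cases hk : k = i
    · subst hk; simp
    · simp [hk, (Ne.symm hk : ¬ i = k)]
  rw [this, zero_mul]

lemma prodL2 {m a : ℕ} (i j : Fin (2^m)) (kk : ℕ) (hbit : bwBit (i:ℕ) (m-a) = 1)
    (hkk : kk + 2^(m-a) = (i:ℕ)) :
    (bwA m a 2 * bwHZM m) i j
      = -2 * bwHZ m (i:ℕ) (j:ℕ) + 2^(bwPar m (i:ℕ)) * bwHZ m kk (j:ℕ) := by
  have hbd : kk < 2^m := lt_of_le_of_lt (hkk ▸ Nat.le_add_right kk (2^(m-a))) i.isLt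
  set i' : Fin (2^m) := ⟨kk, hbd⟩ with hi'
  have hArow : ∀ k : Fin (2^m), bwA m a 2 i k
      = (if k = i then -2 else 0) + (if k = i' then 2^(bwPar m (i:ℕ)) else 0) := by
    intro k
    have hcond : ((k:ℕ) + 2^(m-a) = (i:ℕ)) ↔ k = i' := by
      rw [Fin.ext_iff]
      constructor <;> intro h <;> simp [hi'] at h ⊢ <;> omega
    simp only [bwA, Matrix.sub_apply, bwSigma, Matrix.of_apply, Matrix.one_apply]
    rw [if_neg (by norm_num), if_pos hbit]
    by_cases hk : k = i
    · have hne : ¬ ((k:ℕ) + 2^(m-a) = (i:ℕ)) := by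
        subst hk; have := pow2pos (m-a); omega
      have hki' : ¬ (k = i') := fun h => hne (hcond.mpr h)
      subst hk
      simp [hne, hki']
    · by_cases hk2 : k = i'
      · have hkv : (k:ℕ) + 2^(m-a) = (i:ℕ) := hcond.mpr hk2
        have hne1 : ¬ (i' = i) := fun h => by
          have hv := congrArg Fin.val h
          have := pow2pos (m-a)
          simp only [hi'] at hv
          omega
        simp [hk, hk2, hkv, hkk, hne1, Ne.symm hne1, (by rw [← hk2]; exact hkv : ((i':ℕ) + 2^(m-a) = (i:ℕ)))]
      · have hkv : ¬ ((k:ℕ) + 2^(m-a) = (i:ℕ)) := fun h => hk2 (hcond.mp h)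
        simp [hk, hk2, hkv, (Ne.symm hk : ¬ i = k)]
  rw [Matrix.mul_apply, Finset.sum_congr rfl (fun k _ => by rw [hArow k]), sum_two_ite]
  simp [bwHZM, hi']

lemma prodL2' {m a : ℕ} (i j : Fin (2^m)) (hbit : bwBit (i:ℕ) (m-a) = 0) :
    (bwA m a 2 * bwHZM m) i j = 0 := by
  rw [Matrix.mul_apply]
  apply Finset.sum_eq_zero
  intro k _
  have : bwA m a 2 i k = 0 := by
    simp only [bwA, Matrix.sub_apply, bwSigma, Matrix.of_apply, Matrix.one_apply]
    rw [if_neg (by norm_num), if_neg (by simp [hbit])]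
    by_cases hk : k = i
    · subst hk; simp
    · simp [hk, (Ne.symm hk : ¬ i = k)]
  rw [this, zero_mul]

lemma prodR1 {m a : ℕ} (i j : Fin (2^m)) (hbit : bwBit (j:ℕ) (m-a) = 0)
    (hbd : (j:ℕ) + 2^(m-a) < 2^m) :
    (bwHZM m * (bwA m a 1)ᵀ) i j
      = -2 * bwHZ m (i:ℕ) (j:ℕ) + 2^(bwPar m (j:ℕ)) * bwHZ m (i:ℕ) ((j:ℕ) + 2^(m-a)) := by
  set j' : Fin (2^m) := ⟨(j:ℕ) + 2^(m-a), hbd⟩ with hj'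
  have hArow : ∀ k : Fin (2^m), bwA m a 1 j k
      = (if k = j then -2 else 0) + (if k = j' then 2^(bwPar m (j:ℕ)) else 0) := by
    intro k
    have hcond : ((k:ℕ) = (j:ℕ) + 2^(m-a)) ↔ k = j' := by
      rw [Fin.ext_iff]
    simp only [bwA, Matrix.sub_apply, bwSigma, Matrix.of_apply, Matrix.one_apply,
      if_pos rfl, if_pos hbit]
    by_cases hk : k = j
    · have hne : ¬ ((k:ℕ) = (j:ℕ) + 2^(m-a)) := by
        subst hk; have := pow2pos (m-a); omega
      have hki' : ¬ (k = j') := fun h => hne (hcond.mpr h)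
      subst hk
      simp [hne, hki']
    · by_cases hk2 : k = j'
      · have hkv : (k:ℕ) = (j:ℕ) + 2^(m-a) := hcond.mpr hk2
        have hne1 : ¬ (j' = j) := fun h => by
          have hv := congrArg Fin.val h
          have := pow2pos (m-a)
          simp only [hj'] at hv
          omega
        simp [hk, hk2, hkv, hne1, Ne.symm hne1, (by rw [← hk2]; exact hkv : ((j':ℕ) = (j:ℕ) + 2^(m-a)))]
      · have hkv : ¬ ((k:ℕ) = (j:ℕ) + 2^(m-a)) := fun h => hk2 (hcond.mp h)
        simp [hk, hk2, hkv, (Ne.symm hk : ¬ j = k)]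
  have : ∀ k : Fin (2^m), (bwA m a 1)ᵀ k j = bwA m a 1 j k := fun k => rfl
  rw [Matrix.mul_apply, Finset.sum_congr rfl (fun k _ => by rw [this k, hArow k]), sum_two_ite']
  simp [bwHZM, hj', mul_comm]

lemma prodR1' {m a : ℕ} (i j : Fin (2^m)) (hbit : bwBit (j:ℕ) (m-a) = 1) :
    (bwHZM m * (bwA m a 1)ᵀ) i j = 0 := by
  rw [Matrix.mul_apply]
  apply Finset.sum_eq_zero
  intro k _
  have : bwA m a 1 j k = 0 := by
    simp only [bwA, Matrix.sub_apply, bwSigma, Matrix.of_apply, Matrix.one_apply,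
      if_pos rfl]
    rw [if_neg (show ¬ bwBit (j:ℕ) (m-a) = 0 from by rw [hbit]; norm_num)]
    by_cases hk : k = j
    · subst hk; simp
    · simp [hk, (Ne.symm hk : ¬ j = k)]
  rw [show (bwA m a 1)ᵀ k j = bwA m a 1 j k from rfl, this, mul_zero]

lemma prodR2 {m a : ℕ} (i j : Fin (2^m)) (kk : ℕ) (hbit : bwBit (j:ℕ) (m-a) = 1)
    (hkk : kk + 2^(m-a) = (j:ℕ)) :
    (bwHZM m * (bwA m a 2)ᵀ) i j
      = -2 * bwHZ m (i:ℕ) (j:ℕ) + 2^(bwPar m (j:ℕ)) * bwHZ m (i:ℕ) kk := by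
  have hbd : kk < 2^m := lt_of_le_of_lt (hkk ▸ Nat.le_add_right kk (2^(m-a))) j.isLt
  set j' : Fin (2^m) := ⟨kk, hbd⟩ with hj'
  have hArow : ∀ k : Fin (2^m), bwA m a 2 j k
      = (if k = j then -2 else 0) + (if k = j' then 2^(bwPar m (j:ℕ)) else 0) := by
    intro k
    have hcond : ((k:ℕ) + 2^(m-a) = (j:ℕ)) ↔ k = j' := by
      rw [Fin.ext_iff]
      constructor <;> intro h <;> simp [hj'] at h ⊢ <;> omega
    simp only [bwA, Matrix.sub_apply, bwSigma, Matrix.of_apply, Matrix.one_apply]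
    rw [if_neg (by norm_num), if_pos hbit]
    by_cases hk : k = j
    · have hne : ¬ ((k:ℕ) + 2^(m-a) = (j:ℕ)) := by
        subst hk; have := pow2pos (m-a); omega
      have hki' : ¬ (k = j') := fun h => hne (hcond.mpr h)
      subst hk
      simp [hne, hki']
    · by_cases hk2 : k = j'
      · have hkv : (k:ℕ) + 2^(m-a) = (j:ℕ) := hcond.mpr hk2
        have hne1 : ¬ (j' = j) := fun h => by
          have hv := congrArg Fin.val h
          have := pow2pos (m-a)
          simp only [hj'] at hv
          omega
        simp [hk, hk2, hkv, hkk, hne1, Ne.symm hne1, (by rw [← hk2]; exact hkv : ((j':ℕ) + 2^(m-a) = (j:ℕ)))]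
      · have hkv : ¬ ((k:ℕ) + 2^(m-a) = (j:ℕ)) := fun h => hk2 (hcond.mp h)
        simp [hk, hk2, hkv, (Ne.symm hk : ¬ j = k)]
  have htr : ∀ k : Fin (2^m), (bwA m a 2)ᵀ k j = bwA m a 2 j k := fun k => rfl
  rw [Matrix.mul_apply, Finset.sum_congr rfl (fun k _ => by rw [htr k, hArow k]), sum_two_ite']
  simp [bwHZM, hj', mul_comm]

lemma prodR2' {m a : ℕ} (i j : Fin (2^m)) (hbit : bwBit (j:ℕ) (m-a) = 0) :
    (bwHZM m * (bwA m a 2)ᵀ) i j = 0 := by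
  rw [Matrix.mul_apply]
  apply Finset.sum_eq_zero
  intro k _
  have : bwA m a 2 j k = 0 := by
    simp only [bwA, Matrix.sub_apply, bwSigma, Matrix.of_apply, Matrix.one_apply]
    rw [if_neg (by norm_num), if_neg (by simp [hbit])]
    by_cases hk : k = j
    · subst hk; simp
    · simp [hk, (Ne.symm hk : ¬ j = k)]
  rw [show (bwA m a 2)ᵀ k j = bwA m a 2 j k from rfl, this, mul_zero]

lemma term_odd_charY {m : ℕ} (hm : Odd m) (hm5 : 5 ≤ m) {p y z : ℕ}
    (h1 : p + bwPar m y = 1) :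
    ((2:ℤ)^p * bwHZ m y z) % 2 = 1
      ↔ (p = 0 ∧ bwPar m z = 0 ∧ z < y ∧ bwDD m y z = m) := by
  rw [term_odd_iff hm hm5]
  have hle := bwDD_le m y z
  have hpz := bwPar_le m z
  have hN := bwN_zero_iff hm y z
  constructor
  · rintro ⟨hp, hlt, hn⟩
    have h2 := hN.mp hn
    exact ⟨hp, by omega, hlt, by omega⟩
  · rintro ⟨hp, hpz0, hlt, hdd⟩
    exact ⟨hp, hlt, hN.mpr (by omega)⟩

lemma term_odd_charZ {m : ℕ} (hm : Odd m) (hm5 : 5 ≤ m) {p y z : ℕ}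
    (h1 : p + bwPar m z = 1) :
    ((2:ℤ)^p * bwHZ m y z) % 2 = 1
      ↔ (p = 0 ∧ bwPar m y = 0 ∧ z < y ∧ bwDD m y z = m) := by
  rw [term_odd_iff hm hm5]
  have hle := bwDD_le m y z
  have hpy := bwPar_le m y
  have hN := bwN_zero_iff hm y z
  constructor
  · rintro ⟨hp, hlt, hn⟩
    have h2 := hN.mp hn
    exact ⟨hp, by omega, hlt, by omega⟩
  · rintro ⟨hp, hpy0, hlt, hdd⟩
    exact ⟨hp, hlt, hN.mpr (by omega)⟩

lemma bridgeL {m : ℕ} (hm : Odd m) (hm5 : 5 ≤ m) (A : Matrix (Fin (2^m)) (Fin (2^m)) ℤ)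
    (i j : Fin (2^m)) :
    (A.map (Int.cast : ℤ → ℝ) * bwH m) i j = (((A * bwHZM m) i j : ℤ) : ℝ) := by
  rw [bwH_eq_map hm hm5]
  simp only [Matrix.mul_apply, Matrix.map_apply]
  push_cast
  rfl

lemma bridgeR {m : ℕ} (hm : Odd m) (hm5 : 5 ≤ m) (A : Matrix (Fin (2^m)) (Fin (2^m)) ℤ)
    (i j : Fin (2^m)) :
    (bwH m * (A.map (Int.cast : ℤ → ℝ))ᵀ) i j = (((bwHZM m * Aᵀ) i j : ℤ) : ℝ) := by
  rw [bwH_eq_map hm hm5]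
  simp only [Matrix.mul_apply, Matrix.map_apply, Matrix.transpose_apply]
  push_cast
  rfl

lemma even_to_real {X Y : ℤ} (h : (X - Y) % 2 = 0) : ∃ k : ℤ, (X:ℝ) - (Y:ℝ) = 2 * k := by
  refine ⟨(X - Y) / 2, ?_⟩
  have h2 : (X - Y : ℤ) = 2 * ((X - Y)/2) := by omega
  have h3 := congrArg (Int.cast : ℤ → ℝ) h2
  push_cast at h3
  linarith

lemma even_to_real0 {X : ℤ} (h : X % 2 = 0) : ∃ k : ℤ, (X:ℝ) = 2 * k := by
  refine ⟨X / 2, ?_⟩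
  have h2 : (X : ℤ) = 2 * (X/2) := by omega
  have h3 := congrArg (Int.cast : ℤ → ℝ) h2
  push_cast at h3
  linarith

/-- For `m ≥ 5` odd and `i > j`, modulo 2: `(A_{ar} H)_{ij} ≡ (H A_{ar}ᵀ)_{ij}` for
`a = 2, …, m`; `(A_{12} H)_{ij} ≡ 0`; and `(H A_{11}ᵀ)_{ij} ≡ 0`. -/
theorem bwA_H_identities_mod_two (m : ℕ) (hm : 5 ≤ m) (hmo : Odd m)
    (i j : Fin (2 ^ m)) (hij : j < i) :
    (∀ a r : ℕ, 2 ≤ a → a ≤ m → (r = 1 ∨ r = 2) →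
      ∃ k : ℤ, ((bwA m a r).map (Int.cast : ℤ → ℝ) * bwH m) i j -
        (bwH m * ((bwA m a r).map (Int.cast : ℤ → ℝ))ᵀ) i j = 2 * k) ∧
    (∃ k : ℤ, ((bwA m 1 2).map (Int.cast : ℤ → ℝ) * bwH m) i j = 2 * k) ∧
    (∃ k : ℤ, (bwH m * ((bwA m 1 1).map (Int.cast : ℤ → ℝ))ᵀ) i j = 2 * k) := by
  have hij' : (j:ℕ) < (i:ℕ) := hij
  refine ⟨?_, ?_, ?_⟩
  · intro a r ha2 ham hr
    have hbm : m - a < m := by omega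
    have hbm1 : m - a < m - 1 := by omega
    rw [bridgeL hmo hm, bridgeR hmo hm]
    apply even_to_real
    rcases hr with rfl | rfl
    · rcases bit01 (i:ℕ) (m-a) with hbi | hbi <;> rcases bit01 (j:ℕ) (m-a) with hbj | hbj
      · -- bits (0,0)
        have hbdi : (i:ℕ) + 2^(m-a) < 2^m := carrybound hbm i.isLt hbi
        have hbdj : (j:ℕ) + 2^(m-a) < 2^m := carrybound hbm j.isLt hbj
        rw [prodL1 i j hbi hbdi, prodR1 i j hbj hbdj]
        have hfi := bwPar_flip hbm hbi
        have hfj := bwPar_flip hbm hbj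
        have hcL := term_odd_charY hmo hm (z := (j:ℕ))
          (show bwPar m (i:ℕ) + bwPar m ((i:ℕ)+2^(m-a)) = 1 by omega)
        have hcR := term_odd_charZ hmo hm (y := (i:ℕ))
          (show bwPar m (j:ℕ) + bwPar m ((j:ℕ)+2^(m-a)) = 1 by omega)
        have hEQ := equiv1 hm hbm1 i.isLt j.isLt hij' hbi hbj
        have hDL := bwDD_eq_m_iff m ((i:ℕ)+2^(m-a)) (j:ℕ)
        have hDR := bwDD_eq_m_iff m (i:ℕ) ((j:ℕ)+2^(m-a))
        have hlink : ((2:ℤ)^(bwPar m (i:ℕ)) * bwHZ m ((i:ℕ)+2^(m-a)) (j:ℕ)) % 2 = 1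
            ↔ ((2:ℤ)^(bwPar m (j:ℕ)) * bwHZ m (i:ℕ) ((j:ℕ)+2^(m-a))) % 2 = 1 := by
          rw [hcL, hcR]
          constructor
          · rintro ⟨h1,h2,h3,h4⟩
            have h5 := hEQ.mp (hDL.mp h4)
            exact ⟨h2, h1, h5.2, hDR.mpr h5.1⟩
          · rintro ⟨h1,h2,h3,h4⟩
            have h5 := hEQ.mpr ⟨hDR.mp h4, h3⟩
            have hpp := pow2pos (m-a)
            exact ⟨h2, h1, by omega, hDL.mpr h5⟩
        rcases Int.emod_two_eq ((2:ℤ)^(bwPar m (i:ℕ)) * bwHZ m ((i:ℕ)+2^(m-a)) (j:ℕ)) with h|h <;>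
          rcases Int.emod_two_eq ((2:ℤ)^(bwPar m (j:ℕ)) * bwHZ m (i:ℕ) ((j:ℕ)+2^(m-a))) with h'|h'
        · omega
        · exact absurd (hlink.mpr h') (by omega)
        · exact absurd (hlink.mp h) (by omega)
        · omega
      · -- bits (0,1)
        have hbdi : (i:ℕ) + 2^(m-a) < 2^m := carrybound hbm i.isLt hbi
        rw [prodL1 i j hbi hbdi, prodR1' i j hbj]
        have hfi := bwPar_flip hbm hbi
        have hcL := term_odd_charY hmo hm (z := (j:ℕ))
          (show bwPar m (i:ℕ) + bwPar m ((i:ℕ)+2^(m-a)) = 1 by omega)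
        have hcl0 : ((2:ℤ)^(bwPar m (i:ℕ)) * bwHZ m ((i:ℕ)+2^(m-a)) (j:ℕ)) % 2 = 0 := by
          rcases Int.emod_two_eq ((2:ℤ)^(bwPar m (i:ℕ)) * bwHZ m ((i:ℕ)+2^(m-a)) (j:ℕ)) with h|h
          · exact h
          · exfalso
            obtain ⟨h1,h2,h3,h4⟩ := hcL.mp h
            have h5 := (bwDD_eq_m_iff m ((i:ℕ)+2^(m-a)) (j:ℕ)).mp h4 (m-a) hbm
            rw [bitadd hbi (m-a), if_pos rfl, hbj] at h5
            exact h5 rfl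
        omega
      · -- bits (1,0)
        have hbdj : (j:ℕ) + 2^(m-a) < 2^m := carrybound hbm j.isLt hbj
        rw [prodL1' i j hbi, prodR1 i j hbj hbdj]
        have hfj := bwPar_flip hbm hbj
        have hcR := term_odd_charZ hmo hm (y := (i:ℕ))
          (show bwPar m (j:ℕ) + bwPar m ((j:ℕ)+2^(m-a)) = 1 by omega)
        have hcr0 : ((2:ℤ)^(bwPar m (j:ℕ)) * bwHZ m (i:ℕ) ((j:ℕ)+2^(m-a))) % 2 = 0 := by
          rcases Int.emod_two_eq ((2:ℤ)^(bwPar m (j:ℕ)) * bwHZ m (i:ℕ) ((j:ℕ)+2^(m-a))) with h|h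
          · exact h
          · exfalso
            obtain ⟨h1,h2,h3,h4⟩ := hcR.mp h
            have h5 := (bwDD_eq_m_iff m (i:ℕ) ((j:ℕ)+2^(m-a))).mp h4 (m-a) hbm
            rw [bitadd hbj (m-a), if_pos rfl, hbi] at h5
            exact h5 rfl
        omega
      · rw [prodL1' i j hbi, prodR1' i j hbj]
        norm_num
    · -- r = 2
      rcases bit01 (i:ℕ) (m-a) with hbi | hbi <;> rcases bit01 (j:ℕ) (m-a) with hbj | hbj
      · rw [prodL2' i j hbi, prodR2' i j hbj]
        norm_num
      · -- i bit 0, j bit 1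
        rw [prodL2' i j hbi]
        obtain ⟨k', hjk, hbk'⟩ := split_of_bit_one hbj
        rw [prodR2 i j k' hbj hjk.symm]
        have hfj := bwPar_flip hbm hbk'
        rw [← hjk] at hfj
        have hcR := term_odd_charZ hmo hm (y := (i:ℕ)) hfj
        have hcr0 : ((2:ℤ)^(bwPar m (j:ℕ)) * bwHZ m (i:ℕ) k') % 2 = 0 := by
          rcases Int.emod_two_eq ((2:ℤ)^(bwPar m (j:ℕ)) * bwHZ m (i:ℕ) k') with h|h
          · exact h
          · exfalso
            obtain ⟨h1,h2,h3,h4⟩ := hcR.mp h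
            have h5 := (bwDD_eq_m_iff m (i:ℕ) k').mp h4 (m-a) hbm
            rw [hbi, hbk'] at h5
            exact h5 rfl
        omega
      · -- i bit 1, j bit 0
        rw [prodR2' i j hbj]
        obtain ⟨k, hik, hbk⟩ := split_of_bit_one hbi
        rw [prodL2 i j k hbi hik.symm]
        have hfi := bwPar_flip hbm hbk
        rw [← hik] at hfi
        have hcL := term_odd_charY hmo hm (z := (j:ℕ))
          (show bwPar m (i:ℕ) + bwPar m k = 1 by omega)
        have hcl0 : ((2:ℤ)^(bwPar m (i:ℕ)) * bwHZ m k (j:ℕ)) % 2 = 0 := by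
          rcases Int.emod_two_eq ((2:ℤ)^(bwPar m (i:ℕ)) * bwHZ m k (j:ℕ)) with h|h
          · exact h
          · exfalso
            obtain ⟨h1,h2,h3,h4⟩ := hcL.mp h
            have h5 := (bwDD_eq_m_iff m k (j:ℕ)).mp h4 (m-a) hbm
            rw [hbk, hbj] at h5
            exact h5 rfl
        omega
      · -- both bits 1
        obtain ⟨k, hik, hbk⟩ := split_of_bit_one hbi
        obtain ⟨k', hjk, hbk'⟩ := split_of_bit_one hbj
        rw [prodL2 i j k hbi hik.symm, prodR2 i j k' hbj hjk.symm]
        have hfi := bwPar_flip hbm hbk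
        rw [← hik] at hfi
        have hfj := bwPar_flip hbm hbk'
        rw [← hjk] at hfj
        have hcL := term_odd_charY hmo hm (z := (j:ℕ))
          (show bwPar m (i:ℕ) + bwPar m k = 1 by omega)
        have hcR := term_odd_charZ hmo hm (y := (i:ℕ)) hfj
        have hkk' : k' < k := by
          rw [hik, hjk] at hij'
          omega
        have hik2 : k + 2^(m-a) < 2^m := by rw [← hik]; exact i.isLt
        have hjk2 : k' + 2^(m-a) < 2^m := by rw [← hjk]; exact j.isLt
        have hEQ := equiv2 hm hbm1 hik2 hjk2 hkk' hbk hbk'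
        have hDL := bwDD_eq_m_iff m k (j:ℕ)
        have hDR := bwDD_eq_m_iff m (i:ℕ) k'
        have hpp := pow2pos (m-a)
        have hlink : ((2:ℤ)^(bwPar m (i:ℕ)) * bwHZ m k (j:ℕ)) % 2 = 1
            ↔ ((2:ℤ)^(bwPar m (j:ℕ)) * bwHZ m (i:ℕ) k') % 2 = 1 := by
          rw [hcL, hcR]
          constructor
          · rintro ⟨h1,h2,h3,h4⟩
            have h4' : ∀ l, l < m → bwBit k l ≠ bwBit (k' + 2^(m-a)) l := by
              intro l hl
              rw [← hjk]
              exact hDL.mp h4 l hl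
            have h5 := hEQ.mp ⟨h4', by omega⟩
            refine ⟨h2, h1, by omega, hDR.mpr ?_⟩
            intro l hl
            rw [hik]
            exact h5 l hl
          · rintro ⟨h1,h2,h3,h4⟩
            have h4' : ∀ l, l < m → bwBit (k + 2^(m-a)) l ≠ bwBit k' l := by
              intro l hl
              rw [← hik]
              exact hDR.mp h4 l hl
            have h5 := hEQ.mpr h4'
            refine ⟨h2, h1, by omega, hDL.mpr ?_⟩
            intro l hl
            rw [hjk]
            exact h5.1 l hl
        rcases Int.emod_two_eq ((2:ℤ)^(bwPar m (i:ℕ)) * bwHZ m k (j:ℕ)) with h|h <;>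
          rcases Int.emod_two_eq ((2:ℤ)^(bwPar m (j:ℕ)) * bwHZ m (i:ℕ) k') with h'|h'
        · omega
        · exact absurd (hlink.mpr h') (by omega)
        · exact absurd (hlink.mp h) (by omega)
        · omega
  · -- part 2 : A_{12} H
    rw [bridgeL hmo hm]
    apply even_to_real0
    rcases bit01 (i:ℕ) (m-1) with hbi | hbi
    · rw [prodL2' (a := 1) i j hbi]
      norm_num
    · obtain ⟨k, hik, hbk⟩ := split_of_bit_one hbi
      rw [prodL2 (a := 1) i j k hbi hik.symm]
      have hfi := bwPar_flip (show m - 1 < m by omega) hbk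
      rw [← hik] at hfi
      have hcL := term_odd_charY hmo hm (z := (j:ℕ))
        (show bwPar m (i:ℕ) + bwPar m k = 1 by omega)
      have hcl0 : ((2:ℤ)^(bwPar m (i:ℕ)) * bwHZ m k (j:ℕ)) % 2 = 0 := by
        rcases Int.emod_two_eq ((2:ℤ)^(bwPar m (i:ℕ)) * bwHZ m k (j:ℕ)) with h|h
        · exact h
        · exfalso
          obtain ⟨h1,h2,h3,h4⟩ := hcL.mp h
          have h5 := (bwDD_eq_m_iff m k (j:ℕ)).mp h4 (m-1) (by omega)
          have hp : (2:ℕ)^m = 2^(m-1) * 2 := by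
            rw [← pow_succ]
            congr 1
            omega
          have hilt := i.isLt
          have hk1 : k < 2^(m-1) := by
            rw [hik] at hilt
            omega
          have hk2 : k < 2^m := by omega
          have hbk1 : bwBit k (m-1) = 0 := (top_split' (by omega) hk2).mpr hk1
          rw [hbk1] at h5
          have hbj1 : bwBit (j:ℕ) (m-1) = 1 := by
            rcases bit01 (j:ℕ) (m-1) with h'|h'
            · exact absurd h'.symm h5
            · exact h'
          have hj1 := (top_split (show 1 ≤ m by omega) j.isLt).mp hbj1
          omega
      omega
  · -- part 3 : H A_{11}ᵀ
    rw [bridgeR hmo hm]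
    apply even_to_real0
    rcases bit01 (j:ℕ) (m-1) with hbj | hbj
    · have hbdj : (j:ℕ) + 2^(m-1) < 2^m := carrybound (by omega) j.isLt hbj
      rw [prodR1 (a := 1) i j hbj hbdj]
      have hfj := bwPar_flip (show m - 1 < m by omega) hbj
      have hcR := term_odd_charZ hmo hm (y := (i:ℕ))
        (show bwPar m (j:ℕ) + bwPar m ((j:ℕ)+2^(m-1)) = 1 by omega)
      have hcr0 : ((2:ℤ)^(bwPar m (j:ℕ)) * bwHZ m (i:ℕ) ((j:ℕ)+2^(m-1))) % 2 = 0 := by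
        rcases Int.emod_two_eq ((2:ℤ)^(bwPar m (j:ℕ)) * bwHZ m (i:ℕ) ((j:ℕ)+2^(m-1))) with h|h
        · exact h
        · exfalso
          obtain ⟨h1,h2,h3,h4⟩ := hcR.mp h
          have h5 := (bwDD_eq_m_iff m (i:ℕ) ((j:ℕ)+2^(m-1))).mp h4 (m-1) (by omega)
          rw [bitadd hbj (m-1), if_pos rfl] at h5
          have hbi0 : bwBit (i:ℕ) (m-1) = 0 := by
            rcases bit01 (i:ℕ) (m-1) with h'|h'
            · exact h'
            · exact absurd h' h5
          have hi1 := (top_split' (show 1 ≤ m by omega) i.isLt).mp hbi0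
          omega
      omega
    · rw [prodR1' (a := 1) i j hbj]
      norm_num
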